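/- arXiv:1812.05346 — 3 statements merged into one kernel-verified Lean document; each statement's English description precedes it below -/
import Mathlib

section
/- Let M = (a b; c d) be a 2×2 integer matrix with ad − bc = 1, let q, p ∈ ℤ with q ≡ ab (mod 2) and p ≡ cd (mod 2), and let j ∈ ℤ. Let M·W_j = (a+jb b; c+jd d), where W_j = (1 0; j 1) (note that (q − jb, p − jd) satisfies the parity condition for M·W_j). Suppose μ₁ ∈ ℂ satisfies ⟨S_{(q/2,p/2)}𝓜(M)Ш₁, f⟩ = μ₁·∑_{n∈ℤ} f(n) for every Schwartz f, and μ₂ ∈ ℂ satisfies ⟨S_{((q−jb)/2,(p−jd)/2)}𝓜(M·W_j)Ш₁, f⟩ = μ₂·∑_{n∈ℤ} f(n) for every Schwartz f. Then μ₁ = exp((πi/4)·j·(d·q − p·b))·μ₂. -/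
open MeasureTheory

/-- The metaplectic operator `𝓜(M)` associated with a real matrix `M = (a b; c d)` with
`ad - bc = 1`, acting on functions `f : ℝ → ℂ`.  Square roots with positive real part are
given by the principal complex power. -/
noncomputable def metaplectic (a b c d : ℝ) (f : ℝ → ℂ) (x : ℝ) : ℂ :=
  if b ≠ 0 then
    (Complex.I * (b : ℂ)) ^ (-(1/2) : ℂ) *
      ∫ y : ℝ, Complex.exp ((Real.pi : ℂ) * Complex.I / (b : ℂ) *
        ((d * x ^ 2 - 2 * x * y + a * y ^ 2 : ℝ) : ℂ)) * f y
  else if 0 < a then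
    (a : ℂ) ^ (-(1/2) : ℂ) * Complex.exp ((Real.pi : ℂ) * Complex.I * ((c / a : ℝ) : ℂ)
      * ((x : ℂ)) ^ 2) * f (x / a)
  else
    -Complex.I * ((-a : ℝ) : ℂ) ^ (-(1/2) : ℂ) *
      Complex.exp ((Real.pi : ℂ) * Complex.I * ((c / a : ℝ) : ℂ) * ((x : ℂ)) ^ 2) * f (x / a)

/-- The pairing `⟨S_{(q/2,p/2)} 𝓜(M) Ш₁, f⟩ = ∑_{n ∈ ℤ} (𝓜(M') g)(n)` where
`M' = (d b; c a)` and `g(x) = exp(πiqp/4 + πipx) f(x + q/2)`. -/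
noncomputable def shiftMetaPair (a b c d q p : ℝ) (f : ℝ → ℂ) : ℂ :=
  ∑' n : ℤ, metaplectic d b c a
    (fun x => Complex.exp ((Real.pi : ℂ) * Complex.I * (q : ℂ) * (p : ℂ) / 4
        + (Real.pi : ℂ) * Complex.I * (p : ℂ) * (x : ℂ)) * f (x + q / 2)) (n : ℝ)

noncomputable def myBump : ContDiffBump (0:ℝ) := ⟨1/2, 1, by norm_num, by norm_num⟩

noncomputable def bumpS : SchwartzMap ℝ ℂ where
  toFun := fun x => (myBump x : ℂ)
  smooth' := (Complex.ofRealCLM.contDiff.comp myBump.contDiff)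
  decay' := by
    intro k n
    have hcs : HasCompactSupport (fun x : ℝ => (myBump x : ℂ)) := by
      apply myBump.hasCompactSupport.comp_left (g := fun r : ℝ => (r:ℂ)) (by simp)
    have hcd : ContDiff ℝ n (fun x : ℝ => (myBump x : ℂ)) :=
      Complex.ofRealCLM.contDiff.comp myBump.contDiff
    have hcs' : HasCompactSupport (fun x => ‖x‖ ^ k * ‖iteratedFDeriv ℝ n (fun x : ℝ => (myBump x : ℂ)) x‖) := by
      apply HasCompactSupport.mul_left
      exact (hcs.iteratedFDeriv n).norm
    have hcont : Continuous (fun x : ℝ => ‖x‖ ^ k * ‖iteratedFDeriv ℝ n (fun x : ℝ => (myBump x : ℂ)) x‖) := by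
      apply Continuous.mul (by continuity)
      exact (hcd.continuous_iteratedFDeriv le_rfl).norm
    obtain ⟨C, hC⟩ := hcont.bounded_above_of_compact_support hcs'
    exact ⟨C, fun x => (le_abs_self _).trans ((Real.norm_eq_abs _) ▸ hC x)⟩

lemma bumpS_int (n : ℤ) (hn : n ≠ 0) : bumpS (n : ℝ) = 0 := by
  show ((myBump (n:ℝ) : ℝ) : ℂ) = 0
  rw [myBump.zero_of_le_dist]
  · simp
  · show myBump.rOut ≤ dist (n:ℝ) 0
    simp only [Real.dist_eq, sub_zero]
    show (1:ℝ) ≤ |(n:ℝ)|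
    rw [← Int.cast_abs]
    exact_mod_cast Int.one_le_abs hn

lemma bumpS_zero : bumpS ((0:ℤ) : ℝ) = 1 := by
  show ((myBump ((0:ℤ):ℝ) : ℝ) : ℂ) = 1
  rw [myBump.one_of_mem_closedBall]
  · simp
  · simp [myBump]

lemma bumpS_sum : ∑' n : ℤ, bumpS (n : ℝ) = 1 := by
  rw [tsum_eq_single 0 (fun n hn => bumpS_int n hn)]
  exact bumpS_zero

lemma helper (D E C1 C2 B1 B2 Fv : ℂ)
    (h : Complex.exp C1 * Complex.exp B1 = Complex.exp E * (Complex.exp C2 * Complex.exp B2)) :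
    D * Complex.exp C1 * (Complex.exp B1 * Fv)
      = Complex.exp E * (D * Complex.exp C2 * (Complex.exp B2 * Fv)) := by
  calc D * Complex.exp C1 * (Complex.exp B1 * Fv)
      = (Complex.exp C1 * Complex.exp B1) * (D * Fv) := by ring
    _ = (Complex.exp E * (Complex.exp C2 * Complex.exp B2)) * (D * Fv) := by rw [h]
    _ = _ := by ring

set_option maxHeartbeats 1600000 in
lemma key (a b c d q p j : ℤ) (hdet : a * d - b * c = 1) (f : ℝ → ℂ) (n : ℤ) :
    metaplectic (d:ℝ) (b:ℝ) (c:ℝ) (a:ℝ)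
      (fun x => Complex.exp ((Real.pi : ℂ) * Complex.I * ((q:ℝ) : ℂ) * ((p:ℝ) : ℂ) / 4
        + (Real.pi : ℂ) * Complex.I * ((p:ℝ) : ℂ) * (x : ℂ)) * f (x + (q:ℝ) / 2)) (n : ℝ)
    = Complex.exp ((Real.pi : ℂ) * Complex.I / 4 * (j : ℂ)
        * ((d : ℂ) * (q : ℂ) - (p : ℂ) * (b : ℂ))) *
      metaplectic (d:ℝ) (b:ℝ) ((c:ℝ) + j * d) ((a:ℝ) + j * b)
      (fun x => Complex.exp ((Real.pi : ℂ) * Complex.I * ((((q:ℝ) - j * b) : ℝ) : ℂ) * ((((p:ℝ) - j * d) : ℝ) : ℂ) / 4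
        + (Real.pi : ℂ) * Complex.I * ((((p:ℝ) - j * d) : ℝ) : ℂ) * (x : ℂ)) * f (x + ((q:ℝ) - j * b) / 2)) (n : ℝ) := by
  -- parity: n^2 - n is even
  obtain ⟨k, hk⟩ : ∃ k : ℤ, n ^ 2 - n = k + k := by
    obtain ⟨k, hk⟩ := Int.even_mul_succ_self (n - 1)
    exact ⟨k, by linarith [hk]⟩
  have hkC : ((n:ℂ)) ^ 2 - (n:ℂ) = (k:ℂ) + (k:ℂ) := by exact_mod_cast congrArg (Int.cast : ℤ → ℂ) hk
  by_cases hb : (b:ℝ) ≠ 0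
  · have hbC : ((b:ℝ):ℂ) ≠ 0 := by exact_mod_cast hb
    rw [metaplectic, metaplectic, if_pos hb, if_pos hb]
    have hsub := MeasureTheory.integral_add_right_eq_self (μ := volume)
      (fun y : ℝ => Complex.exp ((Real.pi : ℂ) * Complex.I / ((b:ℝ):ℂ) *
          ((((a:ℝ) + j * b) * ((n:ℝ)) ^ 2 - 2 * (n:ℝ) * y + (d:ℝ) * y ^ 2 : ℝ) : ℂ)) *
        (Complex.exp ((Real.pi : ℂ) * Complex.I * (((q:ℝ) - j * b : ℝ) : ℂ) * (((p:ℝ) - j * d : ℝ) : ℂ) / 4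
          + (Real.pi : ℂ) * Complex.I * (((p:ℝ) - j * d : ℝ) : ℂ) * ((y:ℝ) : ℂ)) * f (y + ((q:ℝ) - j * b) / 2)))
      ((j:ℝ) * b / 2)
    rw [← hsub]
    conv_rhs => rw [mul_left_comm]
    congr 1
    rw [← MeasureTheory.integral_const_mul]
    refine integral_congr_ae (Filter.Eventually.of_forall fun y => ?_)
    have hcomb : ∀ (u v : ℂ) (z : ℂ), Complex.exp u * (Complex.exp v * z) = Complex.exp (u + v) * z := by
      intro u v z; rw [Complex.exp_add]; ring
    simp only []
    rw [show y + (j:ℝ) * b / 2 + ((q:ℝ) - j * b) / 2 = y + (q:ℝ) / 2 by push_cast; ring]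
    rw [hcomb, hcomb, hcomb]
    congr 1
    rw [Complex.exp_eq_exp_iff_exists_int]
    refine ⟨-(j * k), ?_⟩
    have hb2 : (b:ℂ) ≠ 0 := by exact_mod_cast hb
    push_cast
    field_simp
    ring_nf
    linear_combination (-(16:ℂ) * (b:ℂ) * (j:ℂ)) * hkC
  · push_neg at hb
    have hbz : b = 0 := by exact_mod_cast hb
    subst hbz
    have hd : d ≠ 0 := by rintro rfl; simp at hdet
    have hdR : (d:ℝ) ≠ 0 := by exact_mod_cast hd
    have hdC : (d:ℂ) ≠ 0 := by exact_mod_cast hd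
    simp only [metaplectic, Int.cast_zero, ne_eq, not_true_eq_false, if_false,
      mul_zero, zero_mul, sub_zero, add_zero]
    by_cases hd0 : (0:ℝ) < (d:ℝ)
    · rw [if_pos hd0, if_pos hd0]
      refine helper _ _ _ _ _ _ _ ?_
      rw [← Complex.exp_add, ← Complex.exp_add, ← Complex.exp_add]
      rw [Complex.exp_eq_exp_iff_exists_int]
      refine ⟨-(j * k), ?_⟩
      push_cast
      field_simp [hdC]
      ring_nf
      linear_combination (-(4:ℂ) * (d:ℂ) * (j:ℂ)) * hkC
    · rw [if_neg hd0, if_neg hd0]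
      refine helper _ _ _ _ _ _ _ ?_
      rw [← Complex.exp_add, ← Complex.exp_add, ← Complex.exp_add]
      rw [Complex.exp_eq_exp_iff_exists_int]
      refine ⟨-(j * k), ?_⟩
      push_cast
      field_simp [hdC]
      ring_nf
      linear_combination (-(4:ℂ) * (d:ℂ) * (j:ℂ)) * hkC

lemma pairKey (a b c d q p j : ℤ) (hdet : a * d - b * c = 1) (f : ℝ → ℂ) :
    shiftMetaPair (a:ℝ) (b:ℝ) (c:ℝ) (d:ℝ) (q:ℝ) (p:ℝ) f
      = Complex.exp ((Real.pi : ℂ) * Complex.I / 4 * (j : ℂ)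
          * ((d : ℂ) * (q : ℂ) - (p : ℂ) * (b : ℂ))) *
        shiftMetaPair ((a:ℝ) + j * b) (b:ℝ) ((c:ℝ) + j * d) (d:ℝ)
          ((q:ℝ) - j * b) ((p:ℝ) - j * d) f := by
  rw [shiftMetaPair, shiftMetaPair, ← tsum_mul_left]
  exact tsum_congr fun n => key a b c d q p j hdet f n

/-- Transformation of the eigenvalue `μ` under right multiplication by
`W_j = (1 0; j 1)`: `μ(M; (q,p)) = e^{(πi/4) j (dq - pb)} μ(M W_j; (q-jb, p-jd))`. -/
theorem stmt7 (a b c d q p j : ℤ) (hdet : a * d - b * c = 1)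
    (hq : q ≡ a * b [ZMOD 2]) (hp : p ≡ c * d [ZMOD 2]) (μ₁ μ₂ : ℂ)
    (h1 : ∀ f : SchwartzMap ℝ ℂ,
      shiftMetaPair (a : ℝ) (b : ℝ) (c : ℝ) (d : ℝ) (q : ℝ) (p : ℝ) (⇑f)
        = μ₁ * ∑' n : ℤ, f (n : ℝ))
    (h2 : ∀ f : SchwartzMap ℝ ℂ,
      shiftMetaPair ((a : ℝ) + j * b) (b : ℝ) ((c : ℝ) + j * d) (d : ℝ)
          ((q : ℝ) - j * b) ((p : ℝ) - j * d) (⇑f)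
        = μ₂ * ∑' n : ℤ, f (n : ℝ)) :
    μ₁ = Complex.exp ((Real.pi : ℂ) * Complex.I / 4 * (j : ℂ)
      * ((d : ℂ) * (q : ℂ) - (p : ℂ) * (b : ℂ))) * μ₂ := by
  have hkey := pairKey a b c d q p j hdet (⇑bumpS)
  rw [h1 bumpS, h2 bumpS, bumpS_sum, mul_one, mul_one] at hkey
  exact hkey
end

section
/- Let M = (a b; c d) be a real 2×2 matrix with ad − bc = 1 and b ≠ 0, and let τ ∈ ℂ with Im τ > 0. Set τ' = (c + dτ)/(a + bτ). Then for every x ∈ ℝ: (ib)^(−1/2)·∫_ℝ exp((πi/b)·(d·x² − 2xy + a·y²))·exp(πi·τ·y²) dy = (a + bτ)^(−1/2)·exp(πi·τ'·x²), where both complex square roots are taken with positive real part (note that a + bτ is not real, since b ≠ 0 and Im τ > 0, so the convention is unambiguous). -/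
open MeasureTheory

private lemma re_exp_pos (w : ℂ) (h : |w.im| < Real.pi / 2) : 0 < (Complex.exp w).re := by
  rw [Complex.exp_re]
  have : 0 < Real.cos w.im :=
    Real.cos_pos_of_mem_Ioo ⟨by linarith [(abs_lt.mp h).1], (abs_lt.mp h).2⟩
  positivity

private lemma key_sqrt {b : ℝ} (hb : b ≠ 0) {w : ℂ} (hw0 : w ≠ 0) (hwim : w.im ≠ 0)
    (hre : 0 < (Complex.I * b / w).re) :
    (Complex.I * (b : ℂ)) ^ (-(1/2) : ℂ) * (Complex.I * b / w) ^ ((1/2) : ℂ)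
      = w ^ (-(1/2) : ℂ) := by
  have hib : Complex.I * (b : ℂ) ≠ 0 := by
    simp [Complex.I_ne_zero, hb]
  have hz : Complex.I * (b : ℂ) / w ≠ 0 := div_ne_zero hib hw0
  set u : ℂ := (Complex.I * (b : ℂ)) ^ (-(1/2) : ℂ) * (Complex.I * b / w) ^ ((1/2) : ℂ) with hu
  set v : ℂ := w ^ (-(1/2) : ℂ) with hv
  have hargz : |(Complex.I * (b : ℂ) / w).arg| < Real.pi / 2 :=
    Complex.abs_arg_lt_pi_div_two_iff.mpr (Or.inl hre)
  have hargib : |(Complex.I * (b : ℂ)).arg| = Real.pi / 2 := by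
    rcases hb.lt_or_gt with h | h
    · have : Complex.I * (b : ℂ) = (-b : ℝ) * (-Complex.I) := by push_cast; ring
      rw [this, Complex.arg_real_mul _ (by linarith), Complex.arg_neg_I]
      rw [abs_neg, abs_of_pos (by positivity)]
    · have : Complex.I * (b : ℂ) = (b : ℝ) * Complex.I := by ring
      rw [this, Complex.arg_real_mul _ h, Complex.arg_I, abs_of_pos (by positivity)]
  have hargw : |w.arg| < Real.pi := by
    rcases lt_or_ge w.arg Real.pi with h | h
    · exact abs_lt.mpr ⟨Complex.neg_pi_lt_arg w, h⟩
    · exact absurd (Complex.arg_eq_pi_iff.mp (le_antisymm (Complex.arg_le_pi w) h)).2 hwim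
  have hure : 0 < u.re := by
    have huexp : u = Complex.exp
        ((Complex.log (Complex.I * b / w) - Complex.log (Complex.I * b)) * (1/2 : ℂ)) := by
      rw [hu, Complex.cpow_def_of_ne_zero hib, Complex.cpow_def_of_ne_zero hz, ← Complex.exp_add]
      ring_nf
    rw [huexp]
    apply re_exp_pos
    have : ((Complex.log (Complex.I * b / w) - Complex.log (Complex.I * b)) * (1/2 : ℂ)).im
        = ((Complex.I * (b : ℂ) / w).arg - (Complex.I * (b : ℂ)).arg) / 2 := by
      simp [Complex.sub_im, Complex.log_im, Complex.mul_im]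
      ring
    rw [this, abs_div, abs_of_pos (by norm_num : (0:ℝ) < 2),
      div_lt_iff₀ (by norm_num : (0:ℝ) < 2)]
    calc |(Complex.I * (b : ℂ) / w).arg - (Complex.I * (b : ℂ)).arg|
        ≤ |(Complex.I * (b : ℂ) / w).arg| + |(Complex.I * (b : ℂ)).arg| := abs_sub _ _
      _ < Real.pi / 2 + Real.pi / 2 := by rw [hargib]; linarith
      _ = Real.pi / 2 * 2 := by ring
  have hvre : 0 < v.re := by
    have hvexp : v = Complex.exp (Complex.log w * (-(1/2) : ℂ)) := by
      rw [hv, Complex.cpow_def_of_ne_zero hw0]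
    rw [hvexp]
    apply re_exp_pos
    have : (Complex.log w * (-(1/2) : ℂ)).im = -(w.arg / 2) := by
      simp [Complex.mul_im, Complex.log_im]
      ring
    rw [this, abs_neg, abs_div, abs_of_pos (by norm_num : (0:ℝ) < 2),
      div_lt_iff₀ (by norm_num : (0:ℝ) < 2)]
    linarith
  have hsq : u * u = v * v := by
    have e1 : ((Complex.I * (b : ℂ)) ^ (-(1/2) : ℂ)) * ((Complex.I * (b : ℂ)) ^ (-(1/2) : ℂ))
        = (Complex.I * (b : ℂ))⁻¹ := by
      rw [← Complex.cpow_add _ _ hib, show ((-(1/2) : ℂ) + -(1/2)) = -1 by norm_num,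
        Complex.cpow_neg_one]
    have e2 : ((Complex.I * (b : ℂ) / w) ^ ((1/2) : ℂ)) * ((Complex.I * (b : ℂ) / w) ^ ((1/2) : ℂ))
        = Complex.I * (b : ℂ) / w := by
      rw [← Complex.cpow_add _ _ hz, show ((1/2 : ℂ) + 1/2) = 1 by norm_num, Complex.cpow_one]
    have e3 : v * v = w⁻¹ := by
      rw [hv, ← Complex.cpow_add _ _ hw0, show ((-(1/2) : ℂ) + -(1/2)) = -1 by norm_num,
        Complex.cpow_neg_one]
    rw [hu, e3]
    calc (Complex.I * (b : ℂ)) ^ (-(1/2) : ℂ) * (Complex.I * b / w) ^ ((1/2) : ℂ) *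
          ((Complex.I * (b : ℂ)) ^ (-(1/2) : ℂ) * (Complex.I * b / w) ^ ((1/2) : ℂ))
        = (((Complex.I * (b : ℂ)) ^ (-(1/2) : ℂ)) * ((Complex.I * (b : ℂ)) ^ (-(1/2) : ℂ))) *
          (((Complex.I * (b : ℂ) / w) ^ ((1/2) : ℂ)) *
            ((Complex.I * (b : ℂ) / w) ^ ((1/2) : ℂ))) := by ring
      _ = (Complex.I * (b : ℂ))⁻¹ * (Complex.I * (b : ℂ) / w) := by rw [e1, e2]
      _ = w⁻¹ := by field_simp; exact div_self (Complex.ofReal_ne_zero.mpr hb)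
  rcases mul_self_eq_mul_self_iff.mp hsq with h | h
  · exact h
  · exfalso
    rw [h] at hure
    simp only [Complex.neg_re] at hure
    linarith

/-- Action of a metaplectic operator on a centered Gaussian:
`𝓜(M) e^{πiτy²} = (a + bτ)^{-1/2} e^{πiτ'x²}` with `τ' = (c + dτ)/(a + bτ)`. -/
theorem stmt10 (a b c d : ℝ) (hdet : a * d - b * c = 1) (hb : b ≠ 0)
    (τ : ℂ) (hτ : 0 < τ.im) :
    ∀ x : ℝ,
      (Complex.I * (b : ℂ)) ^ (-(1/2) : ℂ) *
        ∫ y : ℝ, Complex.exp ((Real.pi : ℂ) * Complex.I / (b : ℂ) *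
            ((d : ℂ) * (x : ℂ) ^ 2 - 2 * (x : ℂ) * (y : ℂ) + (a : ℂ) * (y : ℂ) ^ 2)) *
          Complex.exp ((Real.pi : ℂ) * Complex.I * τ * (y : ℂ) ^ 2)
      = ((a : ℂ) + (b : ℂ) * τ) ^ (-(1/2) : ℂ) *
          Complex.exp ((Real.pi : ℂ) * Complex.I *
            (((c : ℂ) + (d : ℂ) * τ) / ((a : ℂ) + (b : ℂ) * τ)) * (x : ℂ) ^ 2) := by
  intro x
  have hbC : (b : ℂ) ≠ 0 := Complex.ofReal_ne_zero.mpr hb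
  have hpi : ((Real.pi : ℝ) : ℂ) ≠ 0 := Complex.ofReal_ne_zero.mpr Real.pi_ne_zero
  have hdetC : (a : ℂ) * d - b * c = 1 := by exact_mod_cast congrArg (Complex.ofReal) hdet
  set w : ℂ := (a : ℂ) + (b : ℂ) * τ with hwdef
  have hwim : w.im = b * τ.im := by simp [hwdef]
  have hwim0 : w.im ≠ 0 := by rw [hwim]; exact mul_ne_zero hb (ne_of_gt hτ)
  have hw0 : w ≠ 0 := fun h => hwim0 (by rw [h]; simp)
  have hw0' : (a : ℂ) + b * τ ≠ 0 := by rw [← hwdef]; exact hw0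
  have hd' : ((a : ℂ) / b + τ) ≠ 0 := by
    intro h
    apply hw0'
    field_simp at h
    linear_combination h
  set B : ℂ := (Real.pi : ℂ) * Complex.I * ((a : ℂ) / b + τ) with hBdef
  have hBre : B.re < 0 := by
    have h1 : B = ((Real.pi : ℝ) : ℂ) * (((a : ℂ) / b + τ) * Complex.I) := by rw [hBdef]; ring
    rw [h1, Complex.re_ofReal_mul, Complex.mul_I_re]
    have h2 : ((a : ℂ) / b + τ).im = τ.im := by
      simp [Complex.add_im, Complex.div_ofReal_im]
    rw [h2]
    have := Real.pi_pos
    nlinarith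
  have hB0 : B ≠ 0 := fun h => by rw [h] at hBre; simp at hBre
  set C : ℂ := (Real.pi : ℂ) * Complex.I / b * (-2 * x) with hCdef
  set D : ℂ := (Real.pi : ℂ) * Complex.I / b * (d * (x:ℂ)^2) with hDdef
  have h1 : ∀ y : ℝ, Complex.exp ((Real.pi : ℂ) * Complex.I / (b : ℂ) *
            ((d : ℂ) * (x : ℂ) ^ 2 - 2 * (x : ℂ) * (y : ℂ) + (a : ℂ) * (y : ℂ) ^ 2)) *
          Complex.exp ((Real.pi : ℂ) * Complex.I * τ * (y : ℂ) ^ 2)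
        = Complex.exp (B * (y:ℂ)^2 + C * (y:ℂ) + D) := by
    intro y
    rw [← Complex.exp_add]
    congr 1
    rw [hBdef, hCdef, hDdef]
    field_simp
    ring
  simp only [h1]
  rw [integral_cexp_quadratic hBre C D]
  have hP : ((Real.pi : ℂ) / -B) = Complex.I * b / w := by
    rw [hBdef, hwdef]
    rw [div_eq_div_iff (by simp [hpi, Complex.I_ne_zero, hd']) hw0']
    have hbi : (b:ℂ) * (b:ℂ)⁻¹ = 1 := mul_inv_cancel₀ hbC
    linear_combination (Real.pi:ℂ) * (b * (a/b) + b*τ) * Complex.I_sq - (Real.pi:ℂ) * a * hbi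
  have hE : D - C^2 / (4 * B) = (Real.pi : ℂ) * Complex.I *
      (((c : ℂ) + (d : ℂ) * τ) / w) * (x : ℂ) ^ 2 := by
    rw [hDdef, hCdef, hBdef, hwdef]
    have h4 : (4 : ℂ) * ((Real.pi : ℂ) * Complex.I * ((a : ℂ) / b + τ)) ≠ 0 :=
      mul_ne_zero (by norm_num : (4:ℂ) ≠ 0)
        (mul_ne_zero (mul_ne_zero hpi Complex.I_ne_zero) hd')
    have hq : ((Real.pi : ℂ) * Complex.I / b * (-2 * x))^2
          / (4 * ((Real.pi : ℂ) * Complex.I * ((a : ℂ) / b + τ)))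
        = (Real.pi:ℂ) * Complex.I * (x:ℂ)^2 / (b * ((a:ℂ) + b*τ)) := by
      rw [div_eq_div_iff h4 (mul_ne_zero hbC hw0')]
      field_simp
      ring
    rw [hq, div_mul_eq_div_div]
    have hbi : (b:ℂ) * (b:ℂ)⁻¹ = 1 := mul_inv_cancel₀ hbC
    have hwi : ((a:ℂ) + b*τ) * ((a:ℂ) + b*τ)⁻¹ = 1 := mul_inv_cancel₀ hw0'
    linear_combination ((Real.pi:ℂ) * Complex.I * (x:ℂ)^2 * (b:ℂ)⁻¹ * ((a:ℂ) + b*τ)⁻¹) * hdetC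
      - ((Real.pi:ℂ) * Complex.I * (x:ℂ)^2 * d * (b:ℂ)⁻¹) * hwi
      + ((Real.pi:ℂ) * Complex.I * (x:ℂ)^2 * ((c:ℂ) + d*τ) * ((a:ℂ) + b*τ)⁻¹) * hbi
  have hre : 0 < (Complex.I * b / w).re := by
    have h2 : (Complex.I * (b:ℂ) / w).re = b * w.im / Complex.normSq w := by
      rw [Complex.div_re]
      simp [Complex.mul_re, Complex.mul_im]
    rw [h2, hwim]
    have hnsq : 0 < Complex.normSq w := Complex.normSq_pos.mpr hw0
    have h3 : b * (b * τ.im) = b^2 * τ.im := by ring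
    rw [h3]
    positivity
  rw [hP, ← mul_assoc, key_sqrt hb hw0 hwim0 hre, hE]
end

section
/- For Δ > 0, r > 0, τ ∈ ℂ with Im τ > 0, and m₀ ∈ ℝ, let G(Δ, r, τ, m₀) = √r·∑_{m∈ℤ} exp(−πi·Δ²·(m + m₀)² + πi·τ·r²·(m + m₀)²) (the series converges absolutely since Im τ > 0). Then for every ε > 0 there exist δ > 0 and T > 0 such that whenever 0 < Δ < δ, |r/Δ² − 1| < δ, Im τ > T and |τ|·Δ² < δ, one has |G(Δ, r, τ, m₀) − exp(−πi/4)| < ε for every m₀ ∈ ℝ. (That is, in the regime r = Δ²(1 + o(1)), Im τ → ∞, |τ| = o(Δ^(−2)), the pairing of the Gaussian exp(πi·τ·x²) against the discretized Fresnel measure √r·∑_m exp(πi(Δ(m+m₀))²)·δ(x − r(m+m₀)) converges to e^{−πi/4}, uniformly in m₀.) -/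
/-- The pairing of the Gaussian `exp(πiτx²)` against the discretized Fresnel measure:
`G(Δ, r, τ, m₀) = √r ∑_{m∈ℤ} exp(-πiΔ²(m + m₀)² + πiτr²(m + m₀)²)`. -/
noncomputable def gaussFresnelPair (Δ r : ℝ) (τ : ℂ) (m₀ : ℝ) : ℂ :=
  (Real.sqrt r : ℂ) * ∑' m : ℤ,
    Complex.exp (-(Real.pi : ℂ) * Complex.I * ((Δ ^ 2 : ℝ) : ℂ) * ((m : ℂ) + (m₀ : ℂ)) ^ 2
      + (Real.pi : ℂ) * Complex.I * τ * ((r ^ 2 : ℝ) : ℂ) * ((m : ℂ) + (m₀ : ℂ)) ^ 2)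

set_option maxHeartbeats 1000000

open Complex Real

lemma gfp_eq1 (Δ r m₀ : ℝ) (τ : ℂ) :
    gaussFresnelPair Δ r τ m₀ = (Real.sqrt r : ℂ) *
      (cexp ((π : ℂ) * I * (τ * (r:ℂ)^2 - (Δ:ℂ)^2) * (m₀:ℂ)^2) *
        jacobiTheta₂ ((τ * (r:ℂ)^2 - (Δ:ℂ)^2) * (m₀:ℂ)) (τ * (r:ℂ)^2 - (Δ:ℂ)^2)) := by
  rw [gaussFresnelPair]
  congr 1
  rw [jacobiTheta₂, ← tsum_mul_left]
  refine tsum_congr fun n => ?_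
  rw [jacobiTheta₂_term, ← Complex.exp_add]
  push_cast
  ring_nf

lemma gfp_eq2 (m₀ : ℝ) {z : ℂ} (hz : z ≠ 0) :
    cexp ((π : ℂ) * I * z * (m₀:ℂ)^2) * jacobiTheta₂ (z * (m₀:ℂ)) z =
      1 / (-I * z) ^ (1/2 : ℂ) * jacobiTheta₂ ((m₀:ℂ)) (-1 / z) := by
  rw [jacobiTheta₂_functional_equation (z * (m₀:ℂ)) z, mul_div_cancel_left₀ _ hz,
    show ∀ c t : ℂ, cexp ((π : ℂ) * I * z * (m₀:ℂ)^2) *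
      (c * cexp (-(π:ℂ) * I * (z * (m₀:ℂ)) ^ 2 / z) * t) =
      cexp ((π : ℂ) * I * z * (m₀:ℂ)^2) * cexp (-(π:ℂ) * I * (z * (m₀:ℂ)) ^ 2 / z) * (c * t)
      from fun c t => by ring,
    ← Complex.exp_add,
    show (π : ℂ) * I * z * (m₀:ℂ)^2 + -(π:ℂ) * I * (z * (m₀:ℂ)) ^ 2 / z = 0 by
      field_simp; ring,
    Complex.exp_zero, one_mul]

lemma theta_tail (m₀ : ℝ) {w : ℂ} {S : ℝ} (hS : 1 ≤ S) (hw : S ≤ w.im) :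
    ‖jacobiTheta₂ (m₀:ℂ) w - 1‖ ≤ 3 * rexp (-π * S) := by
  have hw0 : 0 < w.im := lt_of_lt_of_le one_pos (hS.trans hw)
  set q : ℝ := rexp (-π * S) with hqdef
  have hq0 : 0 < q := Real.exp_pos _
  have hq1 : q < 1 := by
    rw [hqdef, Real.exp_lt_one_iff]
    nlinarith [Real.pi_pos]
  have hq3 : q ≤ 1/3 := by
    have h1 : q ≤ rexp (-π) := by
      rw [hqdef, Real.exp_le_exp]
      nlinarith [Real.pi_pos]
    have h2 : (3:ℝ) ≤ Real.exp π := by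
      nlinarith [Real.add_one_le_exp π, Real.pi_gt_three]
    have h3 : rexp (-π) ≤ 1/3 := by
      rw [Real.exp_neg]
      rw [inv_le_comm₀ (Real.exp_pos π) (by norm_num)] at *
      linarith
    linarith
  -- HasSum for the majorant
  have hgeo : HasSum (fun n : ℕ => q ^ n) (1 - q)⁻¹ := hasSum_geometric_of_lt_one hq0.le hq1
  have hgeo1 : HasSum (fun n : ℕ => q ^ (n + 1)) (q * (1 - q)⁻¹) := by
    simpa [pow_succ, mul_comm] using hgeo.mul_left q
  have hmaj : HasSum (fun n : ℤ => q ^ n.natAbs) ((1 - q)⁻¹ + q * (1 - q)⁻¹) := by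
    refine HasSum.of_nat_of_neg_add_one ?_ ?_
    · simpa using hgeo
    · have hc : ∀ n : ℕ, (-1 + -(n:ℤ)).natAbs = n + 1 := fun n => by omega
      simpa [hc] using hgeo1
  set h : ℤ → ℝ := fun n => q ^ n.natAbs - if n = 0 then 1 else 0 with hhdef
  have hmaj' : HasSum h ((1 - q)⁻¹ + q * (1 - q)⁻¹ - 1) := hmaj.sub (hasSum_ite_eq 0 1)
  -- the series for θ - 1
  have hθ : HasSum (fun n : ℤ => jacobiTheta₂_term n (m₀:ℂ) w - if n = 0 then 1 else 0)
      (jacobiTheta₂ (m₀:ℂ) w - 1) :=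
    (hasSum_jacobiTheta₂_term (m₀:ℂ) hw0).sub (hasSum_ite_eq 0 1)
  have hterm0 : jacobiTheta₂_term 0 (m₀:ℂ) w = 1 := by
    simp [jacobiTheta₂_term]
  have hbound : ∀ n : ℤ, ‖jacobiTheta₂_term n (m₀:ℂ) w - if n = 0 then 1 else 0‖ ≤ h n := by
    intro n
    rcases eq_or_ne n 0 with rfl | hn
    · simp [hterm0, hhdef]
    · rw [if_neg hn, sub_zero, norm_jacobiTheta₂_term, hhdef]
      simp only [if_neg hn, sub_zero]
      rw [show ((m₀:ℂ)).im = 0 from Complex.ofReal_im m₀]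
      rw [show -π * (n:ℝ) ^ 2 * w.im - 2 * π * (n:ℝ) * 0 = -(π * ((n:ℝ) ^ 2 * w.im)) by ring]
      rw [← Real.exp_nat_mul]
      rw [Real.exp_le_exp]
      have h1 : (1 : ℝ) ≤ |(n : ℝ)| := by
        rw [← Int.cast_abs]
        exact_mod_cast Int.one_le_abs hn
      have h2 : ((n:ℝ))^2 = |(n:ℝ)| * |(n:ℝ)| := by rw [sq]; exact (abs_mul_abs_self _).symm
      have h3 : ((n.natAbs : ℝ)) = |(n:ℝ)| := by
        rw [Nat.cast_natAbs, Int.cast_abs]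
      have key : (n.natAbs : ℝ) * S ≤ (n:ℝ)^2 * w.im := by
        rw [h3, h2]
        calc |(n:ℝ)| * S ≤ |(n:ℝ)| * w.im := mul_le_mul_of_nonneg_left hw (abs_nonneg _)
        _ ≤ (|(n:ℝ)| * |(n:ℝ)|) * w.im := mul_le_mul_of_nonneg_right (le_mul_of_one_le_left (abs_nonneg _) h1) hw0.le
      nlinarith [mul_le_mul_of_nonneg_left key Real.pi_pos.le]
  have hsum : ‖jacobiTheta₂ (m₀:ℂ) w - 1‖ ≤ (1 - q)⁻¹ + q * (1 - q)⁻¹ - 1 := by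
    refine le_trans (hθ.norm_le_of_bounded hmaj' hbound) le_rfl
  refine hsum.trans ?_
  have h4 : (0:ℝ) < 1 - q := by linarith
  have h5 : ((1 - q)⁻¹ + q * (1 - q)⁻¹ - 1) * (1 - q) = 2 * q := by
    field_simp
    ring
  nlinarith [h5, hq0, hq3, h4]

lemma cpow_real_mul {r : ℝ} (hr : 0 < r) {w : ℂ} (hw : w ≠ 0) (s : ℂ) :
    ((r:ℂ) * w) ^ s = (r:ℂ) ^ s * w ^ s := by
  have hrC : (r:ℂ) ≠ 0 := Complex.ofReal_ne_zero.2 hr.ne'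
  rw [Complex.cpow_def_of_ne_zero (mul_ne_zero hrC hw),
      Complex.cpow_def_of_ne_zero hrC, Complex.cpow_def_of_ne_zero hw,
      ← Complex.exp_add]
  congr 1
  rw [Complex.log_ofReal_mul hr hw, Complex.ofReal_log hr.le]
  ring

lemma sqrt_cpow {r : ℝ} (hr : 0 < r) {z : ℂ} (hz : z ≠ 0) :
    (Real.sqrt r : ℂ) * (1 / (-I * z) ^ (1/2 : ℂ)) = ((-I * z) / (r:ℂ)) ^ (-(1/2) : ℂ) := by
  have hrC : (r:ℂ) ≠ 0 := Complex.ofReal_ne_zero.2 hr.ne'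
  have hIz : -I * z ≠ 0 := mul_ne_zero (neg_ne_zero.2 Complex.I_ne_zero) hz
  have hu : (-I * z) / (r:ℂ) ≠ 0 := div_ne_zero hIz hrC
  have hsplit : (-I * z) ^ (1/2:ℂ) = (r:ℂ) ^ (1/2:ℂ) * ((-I * z) / (r:ℂ)) ^ (1/2:ℂ) := by
    rw [← cpow_real_mul hr hu (1/2:ℂ)]
    congr 1
    field_simp
  have hsqrt : ((Real.sqrt r : ℝ):ℂ) = (r:ℂ) ^ (1/2:ℂ) := by
    rw [Real.sqrt_eq_rpow]
    rw [show ((1:ℂ)/2) = (((1:ℝ)/2 : ℝ) : ℂ) by push_cast; ring]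
    exact Complex.ofReal_cpow hr.le (1/2)
  have hpow : ((-I * z) / (r:ℂ)) ^ (1/2:ℂ) ≠ 0 := by
    rw [Ne, Complex.cpow_eq_zero_iff]
    rintro ⟨h, -⟩
    exact hu h
  have hsr : (Real.sqrt r : ℂ) ≠ 0 :=
    Complex.ofReal_ne_zero.2 (Real.sqrt_ne_zero'.2 hr)
  rw [Complex.cpow_neg, hsplit, ← hsqrt]
  field_simp

lemma cont_aux : ∀ ε > (0:ℝ), ∃ δ > (0:ℝ), ∀ u : ℂ, ‖u - I‖ < δ →
    ‖u ^ (-(1/2):ℂ) - cexp (-(π:ℂ) * I / 4)‖ < ε := by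
  intro ε hε
  have hI : (I : ℂ) ∈ Complex.slitPlane := by
    simp [Complex.mem_slitPlane_iff]
  have hc : ContinuousAt (fun x : ℂ => x ^ (-(1/2):ℂ)) I :=
    continuousAt_cpow_const hI
  rw [Metric.continuousAt_iff] at hc
  obtain ⟨δ, hδ0, hδ⟩ := hc ε hε
  refine ⟨δ, hδ0, fun u hu => ?_⟩
  have h2 := hδ (show dist u I < δ by rwa [dist_eq_norm])
  rw [dist_eq_norm] at h2
  have h3 : (I:ℂ) ^ (-(1/2):ℂ) = cexp (-(π:ℂ) * I / 4) := by
    rw [Complex.cpow_def_of_ne_zero Complex.I_ne_zero, Complex.log_I]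
    congr 1
    ring
  rwa [h3] at h2


/-- In the regime `r = Δ²(1 + o(1))`, `Im τ → ∞`, `|τ| = o(Δ^{-2})`, the pairing
`G(Δ, r, τ, m₀)` converges to `e^{-πi/4}`, uniformly in `m₀`. -/
theorem stmt18 :
    ∀ ε > (0 : ℝ), ∃ δ > (0 : ℝ), ∃ T > (0 : ℝ), ∀ (Δ r m₀ : ℝ) (τ : ℂ),
      0 < Δ → Δ < δ → 0 < r → |r / Δ ^ 2 - 1| < δ →
      T < τ.im → ‖τ‖ * Δ ^ 2 < δ →
      ‖gaussFresnelPair Δ r τ m₀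
        - Complex.exp (-(Real.pi : ℂ) * Complex.I / 4)‖ < ε := by
  intro ε hε
  set ε' : ℝ := min (ε/4) 1 with hε'def
  have hε'0 : 0 < ε' := lt_min (by linarith) one_pos
  have hε'1 : ε' ≤ 1 := min_le_right _ _
  have hε'ε : ε' ≤ ε/4 := min_le_left _ _
  obtain ⟨δ₁, hδ₁0, hδ₁⟩ := cont_aux ε' hε'0
  set m : ℝ := max 0 (-Real.log (ε'/3)) with hmdef
  have hm0 : (0:ℝ) ≤ m := le_max_left _ _
  refine ⟨min (δ₁/4) (1/2), by positivity, 9 * (1 + m), by positivity, ?_⟩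
  intro Δ r m₀ τ hΔ0 hΔδ hr0 hrΔ hTτ hτΔ
  set δ : ℝ := min (δ₁/4) (1/2) with hδdef
  have hδ0 : (0:ℝ) < δ := lt_min (by linarith) (by norm_num)
  have hδhalf : δ ≤ 1/2 := min_le_right _ _
  have hδδ₁ : δ ≤ δ₁/4 := min_le_left _ _
  have hΔ2 : (0:ℝ) < Δ^2 := by positivity
  have hrΔ' : |r - Δ^2| < δ * Δ^2 := by
    rw [show r/Δ^2 - 1 = (r - Δ^2)/Δ^2 by field_simp, abs_div, abs_of_pos hΔ2,
      div_lt_iff₀ hΔ2] at hrΔ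
    linarith [hrΔ]
  obtain ⟨hd2, hd1⟩ := abs_lt.1 hrΔ'
  have hΔ2r : Δ^2 ≤ 2*r := by nlinarith
  have hτ0 : (0:ℝ) ≤ ‖τ‖ := norm_nonneg τ
  have hτr : ‖τ‖ * r < 2*δ := by
    nlinarith [mul_le_mul_of_nonneg_left hd1.le hτ0, hτΔ, hδ0, hδhalf,
      mul_lt_mul_of_pos_left hτΔ hδ0]
  have hD : |Δ^2/r - 1| ≤ 2*δ := by
    rw [show Δ^2/r - 1 = (Δ^2 - r)/r by field_simp, abs_div, abs_of_pos hr0,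
      div_le_iff₀ hr0]
    rw [abs_le]
    constructor
    · nlinarith [mul_le_mul_of_nonneg_left hΔ2r hδ0.le]
    · nlinarith [mul_le_mul_of_nonneg_left hΔ2r hδ0.le]
  -- complex quantities
  set z : ℂ := τ * (r:ℂ)^2 - (Δ:ℂ)^2 with hzdef
  have hzim : z.im = τ.im * r^2 := by
    rw [hzdef, ← Complex.ofReal_pow, ← Complex.ofReal_pow, Complex.sub_im, Complex.mul_im,
      Complex.ofReal_im, Complex.ofReal_re, Complex.ofReal_im]
    ring
  have hτim0 : 0 < τ.im := lt_trans (by positivity) hTτ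
  have hzim0 : 0 < z.im := by rw [hzim]; positivity
  have hzne : z ≠ 0 := by
    intro h
    rw [h] at hzim0
    simp at hzim0
  set u : ℂ := (-I * z) / (r:ℂ) with hudef
  have hrC : (r:ℂ) ≠ 0 := Complex.ofReal_ne_zero.2 hr0.ne'
  have hui : u - I = I * (((Δ^2/r - 1 : ℝ)):ℂ) - I * τ * (r:ℂ) := by
    rw [hudef, hzdef]
    push_cast
    field_simp
    ring
  have huI : ‖u - I‖ < δ₁ := by
    rw [hui]
    calc ‖I * (((Δ^2/r - 1 : ℝ)):ℂ) - I * τ * (r:ℂ)‖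
        ≤ ‖I * (((Δ^2/r - 1 : ℝ)):ℂ)‖ + ‖I * τ * (r:ℂ)‖ := norm_sub_le _ _
      _ = |Δ^2/r - 1| + ‖τ‖ * r := by
          rw [norm_mul, norm_mul, norm_mul, Complex.norm_I, one_mul, one_mul]
          simp only [Complex.norm_real, Real.norm_eq_abs]
          rw [abs_of_pos hr0]
      _ < 2*δ + 2*δ := add_lt_add_of_le_of_lt hD hτr
      _ ≤ δ₁ := by linarith
  set w : ℂ := -1/z with hwdef
  have hznorm : ‖z‖ ≤ 3*r := by
    have h1 : ‖z‖ ≤ ‖τ * (r:ℂ)^2‖ + ‖(Δ:ℂ)^2‖ := by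
      rw [hzdef]; exact norm_sub_le _ _
    have h2 : ‖τ * (r:ℂ)^2‖ = ‖τ‖ * r^2 := by
      simp [norm_mul, norm_pow, Complex.norm_real, abs_of_pos hr0]
    have h3 : ‖(Δ:ℂ)^2‖ = Δ^2 := by
      simp [norm_pow, Complex.norm_real, abs_of_pos hΔ0]
    rw [h2, h3] at h1
    nlinarith [mul_lt_mul_of_pos_right hτr hr0]
  have hwim' : w.im = z.im / Complex.normSq z := by
    rw [hwdef, neg_div, Complex.neg_im, one_div, Complex.inv_im]; ring
  have hnormSqpos : 0 < Complex.normSq z := Complex.normSq_pos.2 hzne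
  have hnormSq : Complex.normSq z ≤ 9*r^2 := by
    rw [← Complex.sq_norm]
    nlinarith [hznorm, norm_nonneg z]
  have hS : (1+m) ≤ w.im := by
    rw [hwim', hzim, le_div_iff₀ hnormSqpos]
    nlinarith [mul_le_mul_of_nonneg_left hnormSq (by linarith : (0:ℝ) ≤ 1 + m),
      mul_lt_mul_of_pos_right hTτ (by positivity : (0:ℝ) < r^2)]
  have hθb : ‖jacobiTheta₂ (m₀:ℂ) w - 1‖ ≤ 3 * rexp (-π * (1+m)) :=
    theta_tail m₀ (by linarith) hS
  have hθε : ‖jacobiTheta₂ (m₀:ℂ) w - 1‖ < ε' := by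
    refine hθb.trans_lt ?_
    have h1 : rexp (-π*(1+m)) ≤ rexp (-(1+m)) := by
      rw [Real.exp_le_exp]
      nlinarith [Real.pi_gt_three, hm0]
    have h2 : rexp (-(1+m)) = rexp (-1) * rexp (-m) := by
      rw [← Real.exp_add]; ring_nf
    have h3 : rexp (-m) ≤ ε'/3 := by
      have hle : -m ≤ Real.log (ε'/3) := by
        have := le_max_right 0 (-Real.log (ε'/3))
        linarith
      calc rexp (-m) ≤ rexp (Real.log (ε'/3)) := Real.exp_le_exp.2 hle
        _ = ε'/3 := Real.exp_log (by positivity)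
    have h4 : rexp (-1) < 1 := by
      rw [Real.exp_lt_one_iff]; norm_num
    nlinarith [Real.exp_pos (-m), Real.exp_pos (-1), Real.exp_pos (-π*(1+m))]
  have hG : gaussFresnelPair Δ r τ m₀ = u ^ (-(1/2):ℂ) * jacobiTheta₂ (m₀:ℂ) w := by
    rw [gfp_eq1, ← hzdef, gfp_eq2 m₀ hzne, ← hwdef, ← mul_assoc, sqrt_cpow hr0 hzne, ← hudef]
  set e : ℂ := cexp (-(π:ℂ) * I / 4) with hedef
  have heabs : ‖e‖ = 1 := by
    rw [hedef, Complex.norm_exp]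
    norm_num
  have hu' : ‖u ^ (-(1/2):ℂ) - e‖ < ε' := hδ₁ u huI
  set θ : ℂ := jacobiTheta₂ (m₀:ℂ) w with hθdef
  have hθn : ‖θ‖ ≤ 2 := by
    calc ‖θ‖ = ‖(θ - 1) + 1‖ := by rw [sub_add_cancel]
      _ ≤ ‖θ - 1‖ + ‖(1:ℂ)‖ := norm_add_le _ _
      _ ≤ 2 := by rw [norm_one]; linarith
  rw [hG]
  calc ‖u ^ (-(1/2):ℂ) * θ - e‖ = ‖(u ^ (-(1/2):ℂ) - e) * θ + e * (θ - 1)‖ := by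
        rw [show (u ^ (-(1/2):ℂ) - e) * θ + e * (θ - 1) = u ^ (-(1/2):ℂ) * θ - e by ring]
    _ ≤ ‖(u ^ (-(1/2):ℂ) - e) * θ‖ + ‖e * (θ - 1)‖ := norm_add_le _ _
    _ = ‖u ^ (-(1/2):ℂ) - e‖ * ‖θ‖ + ‖θ - 1‖ := by rw [norm_mul, norm_mul, heabs, one_mul]
    _ < ε := by
        nlinarith [norm_nonneg (u ^ (-(1/2):ℂ) - e), norm_nonneg (θ - 1), norm_nonneg θ,
          mul_le_mul_of_nonneg_left hθn (norm_nonneg (u ^ (-(1/2):ℂ) - e))]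
end
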